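/- If 𝔥 is a solvable Lie algebra generated by finitely many elements such that [𝔥,𝔥] is nilpotent and each generator acts on 𝔥 by a locally finite adjoint operator (i.e., every element lies in a finite-dimensional ad-invariant subspace), then 𝔥 is finite-dimensional. -/

import Mathlib

open LieAlgebra

section Helpers

variable {k M : Type} [Field k] [LieRing M] [LieAlgebra k M]

/-- A single locally finite endomorphism admits finite-dimensional invariant
enlargements of any finite-dimensional subspace. -/
lemma single_closure (T : Module.End k M)
    (hlf : ∀ x : M, ∃ W : Submodule k M, FiniteDimensional k W ∧ x ∈ W ∧ ∀ y ∈ W, T y ∈ W)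
    (V : Submodule k M) (hV : FiniteDimensional k V) :
    ∃ U : Submodule k M, FiniteDimensional k U ∧ V ≤ U ∧ ∀ y ∈ U, T y ∈ U := by
  obtain ⟨s, hs⟩ : V.FG := Module.Finite.iff_fg.mp hV
  choose W hWfd hWmem hWinv using hlf
  haveI : ∀ x : s, FiniteDimensional k (W (x : M)) := fun x => hWfd x
  refine ⟨⨆ x : s, W (x : M), inferInstance, ?_, ?_⟩
  · rw [← hs, Submodule.span_le]
    intro x hx
    exact le_iSup (fun x : s => W (x : M)) ⟨x, hx⟩ (hWmem x)
  · intro y hy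
    have : Submodule.map T (⨆ x : s, W (x : M)) ≤ ⨆ x : s, W (x : M) := by
      rw [Submodule.map_iSup]
      exact iSup_mono fun x => Submodule.map_le_iff_le_comap.mpr
        (fun z hz => Submodule.mem_comap.mpr (hWinv _ z hz))
    exact this ⟨y, hy, rfl⟩

lemma pow_mem_inv (T : Module.End k M) (D : Submodule k M) (hD : ∀ x ∈ D, T x ∈ D) :
    ∀ (m : ℕ), ∀ x ∈ D, (T ^ m) x ∈ D := by
  intro m
  induction m with
  | zero => intro x hx; simpa using hx
  | succ m ih =>
    intro x hx
    rw [pow_succ']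
    exact hD _ (ih x hx)

lemma comm_pow (T S : Module.End k M) (D : Submodule k M) (hD : ∀ x ∈ D, T x ∈ D)
    (hc : ∀ x ∈ D, S (T x) = T (S x)) :
    ∀ (m : ℕ), ∀ x ∈ D, S ((T ^ m) x) = (T ^ m) (S x) := by
  intro m
  induction m with
  | zero => intro x _; simp
  | succ m ih =>
    intro x hx
    have h1 : (T ^ (m + 1)) x = (T ^ m) (T x) := by
      rw [pow_succ]; rfl
    have h2 : (T ^ (m + 1)) (S x) = (T ^ m) (T (S x)) := by
      rw [pow_succ]; rfl
    rw [h1, h2, ih (T x) (hD x hx), hc x hx]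

/-- Joint finite-dimensional invariant enlargement for pairwise commuting (on `D`)
locally finite endomorphisms preserving `D`. -/
lemma joint_closure {n : ℕ} (T : Fin n → Module.End k M) (D : Submodule k M)
    (hD : ∀ i, ∀ x ∈ D, T i x ∈ D)
    (hcomm : ∀ i j, ∀ x ∈ D, T i (T j x) = T j (T i x))
    (hlf : ∀ i, ∀ x : M, ∃ W : Submodule k M,
      FiniteDimensional k W ∧ x ∈ W ∧ ∀ y ∈ W, T i y ∈ W)
    (s : Finset (Fin n)) :
    ∀ (V : Submodule k M), V ≤ D → FiniteDimensional k V →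
      ∃ U : Submodule k M, FiniteDimensional k U ∧ V ≤ U ∧ U ≤ D ∧
        ∀ i ∈ s, ∀ y ∈ U, T i y ∈ U := by
  induction s using Finset.induction_on with
  | empty => exact fun V hVD hV => ⟨V, hV, le_rfl, hVD, by simp⟩
  | @insert i s hi ih =>
    intro V hVD hV
    obtain ⟨U₀, hU₀fd, hVU₀, hU₀D, hU₀inv⟩ := ih V hVD hV
    obtain ⟨Uf, hUffd, hU₀Uf, hUfinv⟩ := single_closure (T i) (hlf i) U₀ hU₀fd
    refine ⟨⨆ m : ℕ, U₀.map ((T i) ^ m), ?_, ?_, ?_, ?_⟩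
    · have hle : (⨆ m : ℕ, U₀.map ((T i) ^ m)) ≤ Uf := by
        refine iSup_le fun m => ?_
        rintro y ⟨x, hx, rfl⟩
        exact pow_mem_inv (T i) Uf hUfinv m x (hU₀Uf hx)
      exact Submodule.finiteDimensional_of_le hle
    · have h0 : U₀.map ((T i) ^ 0) = U₀ := by
        ext z; simp [pow_zero]
      calc V ≤ U₀ := hVU₀
        _ = U₀.map ((T i) ^ 0) := h0.symm
        _ ≤ ⨆ m : ℕ, U₀.map ((T i) ^ m) := le_iSup (fun m => U₀.map ((T i) ^ m)) 0
    · refine iSup_le fun m => ?_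
      rintro y ⟨x, hx, rfl⟩
      exact pow_mem_inv (T i) D (hD i) m x (hU₀D hx)
    · intro j hj y hy
      refine Submodule.iSup_induction (motive := fun z => T j z ∈ ⨆ m : ℕ, U₀.map ((T i) ^ m))
        _ hy ?_ (by simp) ?_
      · rintro m z ⟨x, hx, rfl⟩
        rcases Finset.mem_insert.mp hj with hji | hjs
        · subst hji
          have : T j (((T j) ^ m) x) = ((T j) ^ (m + 1)) x := by
            rw [pow_succ']; rfl
          rw [this]
          exact le_iSup (fun m => U₀.map ((T j) ^ m)) (m + 1) ⟨x, hx, rfl⟩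
        · have hcp : T j (((T i) ^ m) x) = ((T i) ^ m) (T j x) :=
            comm_pow (T i) (T j) D (hD i) (fun z hz => hcomm j i z hz) m x (hU₀D hx)
          rw [hcp]
          exact le_iSup (fun m => U₀.map ((T i) ^ m)) m ⟨T j x, hU₀inv j hjs x hx, rfl⟩
      · intro x y hx hy
        rw [map_add]
        exact Submodule.add_mem _ hx hy

end Helpers
open LieAlgebra

variable {k M : Type} [Field k] [LieRing M] [LieAlgebra k M]

/-- If `M` is Lie-generated by the `a i` and `V` is a finite-dimensional subspace
that contains all `⁅a i, a j⁆`, is invariant under all `ad (a i)`, and is closed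
under brackets, then `M` is finite-dimensional. -/
lemma findim_of_invariant {n : ℕ} (a : Fin n → M)
    (hgen : LieSubalgebra.lieSpan k M (Set.range a) = ⊤) (V : Submodule k M)
    (hVfd : FiniteDimensional k V)
    (h1 : ∀ i j, ⁅a i, a j⁆ ∈ V) (h2 : ∀ i, ∀ y ∈ V, ⁅a i, y⁆ ∈ V)
    (h3 : ∀ x ∈ V, ∀ y ∈ V, ⁅x, y⁆ ∈ V) : FiniteDimensional k M := by
  set P : Submodule k M := Submodule.span k (Set.range a) ⊔ V with hPdef
  have hP : P = Submodule.span k (Set.range a ∪ ↑V) := by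
    rw [Submodule.span_union, Submodule.span_eq]
  have base : ∀ x ∈ Set.range a ∪ ↑V, ∀ y ∈ Set.range a ∪ ↑V, ⁅x, y⁆ ∈ P := by
    rintro x (⟨i, rfl⟩ | hxV) y (⟨j, rfl⟩ | hyV)
    · exact Submodule.mem_sup_right (h1 i j)
    · exact Submodule.mem_sup_right (h2 i y hyV)
    · have hneg : ⁅x, a j⁆ = -⁅a j, x⁆ := (lie_skew x (a j)) ▸ rfl
      rw [hneg]
      exact Submodule.mem_sup_right (V.neg_mem (h2 j x hxV))
    · exact Submodule.mem_sup_right (h3 x hxV y hyV)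
  have step1 : ∀ x ∈ Set.range a ∪ ↑V, ∀ y ∈ P, ⁅x, y⁆ ∈ P := by
    intro x hx y hy
    rw [hP] at hy
    induction hy using Submodule.span_induction with
    | mem y hy => exact base x hx y hy
    | zero => rw [lie_zero]; exact P.zero_mem
    | add y z _ _ ihy ihz => rw [lie_add]; exact P.add_mem ihy ihz
    | smul c y _ ihy => rw [lie_smul]; exact P.smul_mem c ihy
  have hbr : ∀ x ∈ P, ∀ y ∈ P, ⁅x, y⁆ ∈ P := by
    intro x hx y hy
    rw [hP] at hx
    induction hx using Submodule.span_induction with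
    | mem x hx => exact step1 x hx y hy
    | zero => rw [zero_lie]; exact P.zero_mem
    | add x z _ _ ihx ihz => rw [add_lie]; exact P.add_mem ihx ihz
    | smul c x _ ihx => rw [smul_lie]; exact P.smul_mem c ihx
  let K : LieSubalgebra k M :=
    { P with lie_mem' := fun {x y} hx hy => hbr x hx y hy }
  have hKtop : K = ⊤ := by
    rw [← top_le_iff, ← hgen]
    apply LieSubalgebra.lieSpan_le.mpr
    rintro x ⟨i, rfl⟩
    exact Submodule.mem_sup_left (Submodule.subset_span ⟨i, rfl⟩)
  have hPtop : P = ⊤ := by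
    have := congrArg (fun K : LieSubalgebra k M => K.toSubmodule) hKtop
    exact this
  haveI : FiniteDimensional k (Submodule.span k (Set.range a)) :=
    FiniteDimensional.span_of_finite k (Set.finite_range a)
  haveI : FiniteDimensional k P := by
    rw [hPdef]; infer_instance
  have : FiniteDimensional k (⊤ : Submodule k M) := hPtop ▸ ‹FiniteDimensional k P›
  exact Module.Finite.equiv (Submodule.topEquiv)


open LieAlgebra

variable {k M : Type} [Field k] [LieRing M] [LieAlgebra k M]

lemma mem_derived_one (x y : M) : ⁅x, y⁆ ∈ derivedSeries k M 1 := by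
  rw [LieAlgebra.derivedSeries_def, show (1 : ℕ) = 0 + 1 from rfl,
    LieAlgebra.derivedSeriesOfIdeal_succ, LieAlgebra.derivedSeriesOfIdeal_zero]
  exact LieSubmodule.lie_mem_lie (LieSubmodule.mem_top x) (LieSubmodule.mem_top y)

/-- The metabelian engine: if moreover `⁅[M,M],[M,M]⁆ = ⊥` then `M` is
finite dimensional. -/
lemma engine {n : ℕ} (a : Fin n → M)
    (hgen : LieSubalgebra.lieSpan k M (Set.range a) = ⊤)
    (hlf : ∀ i : Fin n, ∀ x : M, ∃ W : Submodule k M,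
      FiniteDimensional k W ∧ x ∈ W ∧ ∀ y ∈ W, ⁅a i, y⁆ ∈ W)
    (hII : ⁅derivedSeries k M 1, derivedSeries k M 1⁆ = ⊥) :
    FiniteDimensional k M := by
  set I := derivedSeries k M 1 with hIdef
  let T : Fin n → Module.End k M := fun i => LieAlgebra.ad k M (a i)
  have hTapp : ∀ i x, T i x = ⁅a i, x⁆ := fun i x => rfl
  have hD : ∀ i, ∀ x ∈ I.toSubmodule, T i x ∈ I.toSubmodule := by
    intro i x hx
    exact I.lie_mem hx
  have hcomm : ∀ i j, ∀ x ∈ I.toSubmodule, T i (T j x) = T j (T i x) := by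
    intro i j x hx
    have hz : ⁅⁅a i, a j⁆, x⁆ = 0 := by
      have hmem : ⁅⁅a i, a j⁆, x⁆ ∈ ⁅I, I⁆ :=
        LieSubmodule.lie_mem_lie (mem_derived_one (a i) (a j)) hx
      rw [hII] at hmem
      exact (LieSubmodule.mem_bot _).mp hmem
    have hleib : ⁅a i, ⁅a j, x⁆⁆ = ⁅⁅a i, a j⁆, x⁆ + ⁅a j, ⁅a i, x⁆⁆ := leibniz_lie _ _ _
    rw [hTapp, hTapp, hTapp, hTapp, hleib, hz, zero_add]
  have hlf' : ∀ i, ∀ x : M, ∃ W : Submodule k M,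
      FiniteDimensional k W ∧ x ∈ W ∧ ∀ y ∈ W, T i y ∈ W := by
    intro i x
    obtain ⟨W, h1, h2, h3⟩ := hlf i x
    exact ⟨W, h1, h2, fun y hy => by rw [hTapp]; exact h3 y hy⟩
  set V0 : Submodule k M :=
    Submodule.span k (Set.range (fun p : Fin n × Fin n => ⁅a p.1, a p.2⁆)) with hV0def
  have hV0I : V0 ≤ I.toSubmodule := by
    rw [hV0def, Submodule.span_le]
    rintro x ⟨p, rfl⟩
    exact mem_derived_one (a p.1) (a p.2)
  haveI hV0fd : FiniteDimensional k V0 :=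
    FiniteDimensional.span_of_finite k (Set.finite_range _)
  obtain ⟨U, hUfd, hV0U, hUI, hUinv⟩ :=
    joint_closure T I.toSubmodule hD hcomm hlf' Finset.univ V0 hV0I hV0fd
  apply findim_of_invariant a hgen U hUfd
  · intro i j
    exact hV0U (Submodule.subset_span ⟨(i, j), rfl⟩)
  · intro i y hy
    have := hUinv i (Finset.mem_univ i) y hy
    rwa [hTapp] at this
  · intro x hx y hy
    have hmem : ⁅x, y⁆ ∈ ⁅I, I⁆ := LieSubmodule.lie_mem_lie (hUI hx) (hUI hy)
    rw [hII] at hmem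
    rw [(LieSubmodule.mem_bot _).mp hmem]
    exact U.zero_mem

/-- The quotient map `M → M ⧸ I` as a morphism of Lie algebras. -/
def qhom (I : LieIdeal k M) : M →ₗ⁅k⁆ M ⧸ I :=
  { I.toSubmodule.mkQ with
    map_lie' := fun {x y} => rfl }

lemma qhom_surjective (I : LieIdeal k M) : Function.Surjective (qhom I) :=
  Submodule.Quotient.mk_surjective I.toSubmodule

/-- Extension of finite-dimensionality. -/
lemma findim_of_sub_quot (Z : Submodule k M) (h1 : FiniteDimensional k (M ⧸ Z))
    (h2 : FiniteDimensional k Z) : FiniteDimensional k M := by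
  suffices h : (⊤ : Submodule k M).FG from Module.finite_def.mpr h
  apply Submodule.fg_of_fg_map_of_fg_inf_ker Z.mkQ
  · rw [Submodule.map_top, Submodule.range_mkQ]
    exact Module.finite_def.mp h1
  · rw [Submodule.ker_mkQ, top_inf_eq]
    exact Module.Finite.iff_fg.mp h2

section MainInduction

variable {k : Type} [Field k]

theorem aux_main (c : ℕ) : ∀ (M : Type) [LieRing M] [LieAlgebra k M] {n : ℕ} (a : Fin n → M),
    LieSubalgebra.lieSpan k M (Set.range a) = ⊤ →
    (∀ i : Fin n, ∀ x : M, ∃ W : Submodule k M,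
      FiniteDimensional k W ∧ x ∈ W ∧ ∀ y ∈ W, ⁅a i, y⁆ ∈ W) →
    ((fun N : LieIdeal k M => ⁅LieAlgebra.derivedSeries k M 1, N⁆)^[c]
      (LieAlgebra.derivedSeries k M 1) = ⊥) →
    FiniteDimensional k M := by
  induction c with
  | zero =>
    intro M _ _ n a hgen hlf hder
    rw [Function.iterate_zero_apply] at hder
    apply engine a hgen hlf
    rw [hder]
    exact LieSubmodule.lie_bot _
  | succ c ih =>
    intro M _ _ n a hgen hlf hder
    obtain _ | cc := c
    · -- metabelian case
      rw [Function.iterate_succ_apply', Function.iterate_zero_apply] at hder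
      exact engine a hgen hlf hder
    · -- inductive step
      set I := LieAlgebra.derivedSeries k M 1 with hIdef
      set D : ℕ → LieIdeal k M := fun m => (fun N => ⁅I, N⁆)^[m] I with hDdef
      have hDsucc : ∀ m, D (m + 1) = ⁅I, D m⁆ := fun m =>
        Function.iterate_succ_apply' _ _ _
      have hDle : ∀ m, D m ≤ I := by
        intro m
        induction m with
        | zero => exact le_rfl
        | succ m _ => rw [hDsucc]; exact LieSubmodule.lie_le_left _ _
      set Z := D (cc + 1) with hZdef
      have hIZ : ⁅I, Z⁆ = ⊥ := by rw [← hDsucc]; exact hder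
      set f := qhom Z with hfdef
      have hf : Function.Surjective f := qhom_surjective Z
      set a' : Fin n → (M ⧸ Z) := fun i => f (a i) with ha'def
      -- generation
      have hgen' : LieSubalgebra.lieSpan k (M ⧸ Z) (Set.range a') = ⊤ := by
        rw [eq_top_iff]
        rintro x -
        obtain ⟨y, rfl⟩ := hf x
        have hsub : LieSubalgebra.lieSpan k M (Set.range a) ≤
            (LieSubalgebra.lieSpan k (M ⧸ Z) (Set.range a')).comap f := by
          apply LieSubalgebra.lieSpan_le.mpr
          rintro z ⟨i, rfl⟩
          exact LieSubalgebra.subset_lieSpan ⟨i, rfl⟩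
        have := hsub (hgen ▸ LieSubalgebra.mem_top y)
        exact this
      -- local finiteness
      have hlf' : ∀ i : Fin n, ∀ x : M ⧸ Z, ∃ W : Submodule k (M ⧸ Z),
          FiniteDimensional k W ∧ x ∈ W ∧ ∀ y ∈ W, ⁅a' i, y⁆ ∈ W := by
        intro i x
        obtain ⟨w, rfl⟩ := hf x
        obtain ⟨W, hWfd, hWmem, hWinv⟩ := hlf i w
        refine ⟨W.map f.toLinearMap, inferInstance, ⟨w, hWmem, rfl⟩, ?_⟩
        rintro y ⟨z, hz, rfl⟩
        have : ⁅a' i, f z⁆ = f ⁅a i, z⁆ := (f.map_lie _ _).symm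
        rw [show f.toLinearMap z = f z from rfl, this]
        exact ⟨⁅a i, z⁆, hWinv z hz, rfl⟩
      -- derived series hypothesis in the quotient
      have hmap : ∀ m, LieIdeal.map f (D m) =
          (fun N : LieIdeal k (M ⧸ Z) => ⁅LieAlgebra.derivedSeries k (M ⧸ Z) 1, N⁆)^[m]
            (LieAlgebra.derivedSeries k (M ⧸ Z) 1) := by
        intro m
        induction m with
        | zero => exact LieIdeal.derivedSeries_map_eq 1 hf
        | succ m ihm =>
          rw [Function.iterate_succ_apply', ← ihm, hDsucc,
            LieIdeal.map_bracket_eq f hf, LieIdeal.derivedSeries_map_eq 1 hf]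
      have hZmap : LieIdeal.map f Z = ⊥ := by
        rw [eq_bot_iff, LieIdeal.map_le_iff_le_comap]
        intro z hz
        have : f z = 0 := (Submodule.Quotient.mk_eq_zero Z.toSubmodule).mpr hz
        simp [LieIdeal.mem_comap, this]
      have hder' : (fun N : LieIdeal k (M ⧸ Z) =>
          ⁅LieAlgebra.derivedSeries k (M ⧸ Z) 1, N⁆)^[cc + 1]
          (LieAlgebra.derivedSeries k (M ⧸ Z) 1) = ⊥ := by
        rw [← hmap (cc + 1), ← hZdef, hZmap]
      haveI hQ : FiniteDimensional k (M ⧸ Z) := ih (M ⧸ Z) a' hgen' hlf' hder'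
      -- now show Z is finite dimensional
      set J := D cc with hJdef
      have hZJ : Z = ⁅I, J⁆ := hDsucc cc
      -- finite generation of images
      have hImapfd : FiniteDimensional k (I.toSubmodule.map f.toLinearMap) := by
        exact Submodule.finiteDimensional_of_le le_top
      have hJmapfd : FiniteDimensional k (J.toSubmodule.map f.toLinearMap) := by
        exact Submodule.finiteDimensional_of_le le_top
      obtain ⟨sI, hsI⟩ : (I.toSubmodule.map f.toLinearMap).FG :=
        Module.Finite.iff_fg.mp hImapfd
      obtain ⟨sJ, hsJ⟩ : (J.toSubmodule.map f.toLinearMap).FG :=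
        Module.Finite.iff_fg.mp hJmapfd
      have hliftI : ∀ x : sI, ∃ d, d ∈ I.toSubmodule ∧ f.toLinearMap d = (x : M ⧸ Z) := by
        intro x
        have hx : (x : M ⧸ Z) ∈ I.toSubmodule.map f.toLinearMap := by
          rw [← hsI]; exact Submodule.subset_span x.2
        obtain ⟨d, hd, hfd⟩ := hx
        exact ⟨d, hd, hfd⟩
      have hliftJ : ∀ x : sJ, ∃ d, d ∈ J.toSubmodule ∧ f.toLinearMap d = (x : M ⧸ Z) := by
        intro x
        have hx : (x : M ⧸ Z) ∈ J.toSubmodule.map f.toLinearMap := by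
          rw [← hsJ]; exact Submodule.subset_span x.2
        obtain ⟨d, hd, hfd⟩ := hx
        exact ⟨d, hd, hfd⟩
      choose dI hdI hdIf using hliftI
      choose dJ hdJ hdJf using hliftJ
      set F : Set M := Set.range dI with hFdef
      set G : Set M := Set.range dJ with hGdef
      have hFI : Submodule.span k F ≤ I.toSubmodule := by
        rw [Submodule.span_le]; rintro x ⟨p, rfl⟩; exact hdI p
      have hGJ : Submodule.span k G ≤ J.toSubmodule := by
        rw [Submodule.span_le]; rintro x ⟨p, rfl⟩; exact hdJ p
      have hkerf : ∀ x : M, f.toLinearMap x = 0 → x ∈ Z.toSubmodule := by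
        intro x hx
        exact (Submodule.Quotient.mk_eq_zero Z.toSubmodule).mp hx
      -- decomposition lemma
      have hdecomp : ∀ (K : LieIdeal k M) (s : Finset (M ⧸ Z)) (dd : s → M),
          (∀ x : s, dd x ∈ K.toSubmodule) → (∀ x : s, f.toLinearMap (dd x) = (x : M ⧸ Z)) →
          Submodule.span k (↑s : Set (M ⧸ Z)) = K.toSubmodule.map f.toLinearMap →
          ∀ x ∈ K.toSubmodule, ∃ p ∈ Submodule.span k (Set.range dd),
            ∃ z ∈ Z.toSubmodule, p + z = x := by
        intro K s dd _ hddf hspan x hx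
        have himg : f.toLinearMap '' Set.range dd = ↑s := by
          ext w
          constructor
          · rintro ⟨_, ⟨p, rfl⟩, rfl⟩
            rw [hddf p]; exact p.2
          · intro hw
            exact ⟨dd ⟨w, hw⟩, ⟨⟨w, hw⟩, rfl⟩, hddf ⟨w, hw⟩⟩
        have hfx : f.toLinearMap x ∈ Submodule.map f.toLinearMap (Submodule.span k (Set.range dd)) := by
          rw [← Submodule.span_image, himg, hspan]
          exact Submodule.mem_map_of_mem hx
        obtain ⟨p, hp, hpx⟩ := hfx
        refine ⟨p, hp, x - p, ?_, by abel⟩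
        apply hkerf
        rw [map_sub, hpx, sub_self]
      -- the span of pairwise brackets
      set B : Set M := Set.image2 (fun d e => ⁅d, e⁆) F G with hBdef
      have hBfin : B.Finite := Set.Finite.image2 _ (Set.finite_range dI) (Set.finite_range dJ)
      haveI hBfd : FiniteDimensional k (Submodule.span k B) :=
        FiniteDimensional.span_of_finite k hBfin
      have hpq : ∀ p ∈ Submodule.span k F, ∀ q ∈ Submodule.span k G,
          ⁅p, q⁆ ∈ Submodule.span k B := by
        intro p hp q hq
        induction hp using Submodule.span_induction with
        | mem p hpF =>
          induction hq using Submodule.span_induction with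
          | mem q hqG => exact Submodule.subset_span ⟨p, hpF, q, hqG, rfl⟩
          | zero => rw [lie_zero]; exact Submodule.zero_mem _
          | add q r _ _ ihq ihr => rw [lie_add]; exact Submodule.add_mem _ ihq ihr
          | smul t q _ ihq => rw [lie_smul]; exact Submodule.smul_mem _ t ihq
        | zero => rw [zero_lie]; exact Submodule.zero_mem _
        | add p r _ _ ihp ihr => rw [add_lie]; exact Submodule.add_mem _ ihp ihr
        | smul t p _ ihp => rw [smul_lie]; exact Submodule.smul_mem _ t ihp
      have hZle : Z.toSubmodule ≤ Submodule.span k B := by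
        have hZsub : Z.toSubmodule = LieSubmodule.toSubmodule ⁅I, J⁆ := by rw [← hZJ]
        rw [hZsub, LieSubmodule.lieIdeal_oper_eq_linear_span']
        apply Submodule.span_le.mpr
        rintro w ⟨x, hxI, y, hyJ, rfl⟩
        obtain ⟨p, hp, z, hz, hpzx⟩ := hdecomp I sI dI hdI hdIf hsI x hxI
        obtain ⟨q, hq, z', hz', hqzy⟩ := hdecomp J sJ dJ hdJ hdJf hsJ y hyJ
        have hbotmem : ∀ u ∈ I.toSubmodule, ∀ v ∈ Z.toSubmodule, ⁅u, v⁆ = 0 := by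
          intro u hu v hv
          have : ⁅u, v⁆ ∈ ⁅I, Z⁆ := LieSubmodule.lie_mem_lie hu hv
          rw [hIZ] at this
          exact (LieSubmodule.mem_bot _).mp this
        have hzq : ⁅z, q + z'⁆ = 0 := by
          have hqz' : q + z' ∈ I.toSubmodule := by
            have hq' : q ∈ I.toSubmodule := (hGJ.trans (hDle cc)) hq
            have hz'' : z' ∈ I.toSubmodule := (hDle (cc + 1)) hz'
            exact Submodule.add_mem _ hq' hz''
          have := hbotmem _ hqz' _ hz
          rw [← lie_skew, this, neg_zero]
        have hpz' : ⁅p, z'⁆ = 0 := hbotmem p (hFI hp) z' hz'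
        have hxy : ⁅x, y⁆ = ⁅p, q⁆ := by
          rw [← hpzx, ← hqzy, add_lie, hzq, lie_add, hpz', add_zero, add_zero]
        rw [hxy]
        exact hpq p hp q hq
      haveI hZfd : FiniteDimensional k Z.toSubmodule :=
        Submodule.finiteDimensional_of_le hZle
      exact findim_of_sub_quot Z.toSubmodule hQ hZfd

end MainInduction

/-- A solvable Lie algebra generated by finitely many elements whose
adjoint operators are locally finite, and whose derived ideal is nilpotent, is
finite-dimensional. -/
theorem stmt1 (k L : Type) [Field k] [CharZero k] [LieRing L] [LieAlgebra k L]
    [LieAlgebra.IsSolvable L] (n : ℕ) (a : Fin n → L)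
    (hgen : LieSubalgebra.lieSpan k L (Set.range a) = ⊤)
    (hlf : ∀ i : Fin n, ∀ x : L, ∃ W : Submodule k L,
      FiniteDimensional k W ∧ x ∈ W ∧ ∀ y ∈ W, ⁅a i, y⁆ ∈ W)
    (hnil : LieModule.IsNilpotent ↥(LieAlgebra.derivedSeries k L 1) ↥(LieAlgebra.derivedSeries k L 1)) :
    FiniteDimensional k L := by
  set I := LieAlgebra.derivedSeries k L 1 with hIdef
  obtain ⟨c, hc⟩ := (LieModule.isNilpotent_iff k I I).mp hnil
  have key : ∀ m : ℕ,
      LieSubmodule.toSubmodule ((fun N : LieIdeal k L => ⁅I, N⁆)^[m] I) ≤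
      Submodule.map (I.toSubmodule.subtype)
        (LieSubmodule.toSubmodule (LieModule.lowerCentralSeries k I I m)) := by
    intro m
    induction m with
    | zero =>
      rw [Function.iterate_zero_apply]
      intro x hx
      exact ⟨⟨x, hx⟩, LieSubmodule.mem_top _, rfl⟩
    | succ m ihm =>
      rw [Function.iterate_succ_apply', LieSubmodule.lieIdeal_oper_eq_linear_span']
      apply Submodule.span_le.mpr
      rintro w ⟨x, hxI, y, hyD, rfl⟩
      obtain ⟨ybar, hybar, rfl⟩ := ihm hyD
      have hbr : (⁅(⟨x, hxI⟩ : I), ybar⁆ : I) ∈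
          LieModule.lowerCentralSeries k I I (m + 1) := by
        rw [LieModule.lowerCentralSeries_succ]
        exact LieSubmodule.lie_mem_lie (LieSubmodule.mem_top _) hybar
      exact ⟨⁅(⟨x, hxI⟩ : I), ybar⁆, hbr, rfl⟩
  have hbot : (fun N : LieIdeal k L => ⁅I, N⁆)^[c] I = ⊥ := by
    rw [eq_bot_iff]
    intro x hx
    have := key c hx
    rw [hc] at this
    obtain ⟨y, hy, rfl⟩ := this
    have hy0 : y = 0 := by simpa using hy
    rw [hy0]
    simp
  have hbot' : (fun N : LieIdeal k L => ⁅I, N⁆)^[c + 1] I = ⊥ := by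
    rw [Function.iterate_succ_apply', hbot]
    exact LieSubmodule.lie_bot _
  exact aux_main (c + 1) L a hgen hlf hbot'
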